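/- The sparing number of the Frucht graph is 3. -/

import Mathlib

open Pointwise

/-- The induced set-label on unordered pairs: the sumset of the two vertex labels. -/
def edgeLabel {V : Type*} (f : V → Finset ℕ) : Sym2 V → Finset ℕ :=
  Sym2.lift ⟨fun u v => f u + f v, fun u v => add_comm (f u) (f v)⟩

/-- `f` is a weak integer additive set-indexer of `G`. -/
structure IsWeakIASI {V : Type*} (G : SimpleGraph V) (f : V → Finset ℕ) : Prop where
  nonempty : ∀ v, (f v).Nonempty
  injective : Function.Injective f
  edgeInjective : Set.InjOn (edgeLabel f) G.edgeSet
  weak : ∀ u v, G.Adj u v → (edgeLabel f s(u, v)).card = max (f u).card (f v).card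

/-- The number of mono-indexed edges of `G` under the labeling `f`. -/
noncomputable def monoEdgeCount {V : Type*} (G : SimpleGraph V) (f : V → Finset ℕ) : ℕ :=
  {e ∈ G.edgeSet | (edgeLabel f e).card = 1}.ncard

/-- The sparing number: the minimum number of mono-indexed edges over all weak IASIs. -/
noncomputable def sparingNumber {V : Type*} (G : SimpleGraph V) : ℕ :=
  sInf {n | ∃ f, IsWeakIASI G f ∧ monoEdgeCount G f = n}

/-- The Frucht graph, given by the LCF notation `[-5,-2,-4,2,5,-2,2,5,-2,-5,4,2]`:
a Hamiltonian cycle on `Fin 12` together with chords `i ~ i + aᵢ (mod 12)`,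
where the offsets `(-5,-2,-4,2,5,-2,2,5,-2,-5,4,2)` are taken mod 12. -/
def fruchtGraph : SimpleGraph (Fin 12) :=
  SimpleGraph.fromRel (fun i j =>
    j = i + 1 ∨ j = i + ![7, 10, 8, 2, 5, 10, 2, 5, 10, 7, 4, 2] i)

set_option maxHeartbeats 2000000
set_option maxRecDepth 10000

open Fin.NatCast

instance : DecidableRel fruchtGraph.Adj := fun a b =>
  inferInstanceAs (Decidable (a ≠ b ∧ _))

/-- `monoEdgeCount` as a finset computation. -/
lemma monoEdgeCount_eq (G : SimpleGraph (Fin 12)) [DecidableRel G.Adj] (f : Fin 12 → Finset ℕ) :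
    monoEdgeCount G f = (G.edgeFinset.filter (fun e => (edgeLabel f e).card = 1)).card := by
  have h : {e ∈ G.edgeSet | (edgeLabel f e).card = 1}
      = ↑(G.edgeFinset.filter (fun e => (edgeLabel f e).card = 1)) := by
    rw [Finset.coe_filter]
    ext e
    simp [SimpleGraph.mem_edgeFinset]
  rw [monoEdgeCount, h, Set.ncard_coe_finset]

lemma card_add_eq_one_iff {A B : Finset ℕ} (hA : A.Nonempty) (hB : B.Nonempty) :
    (A + B).card = 1 ↔ A.card = 1 ∧ B.card = 1 := by
  constructor
  · intro h
    have h1 : A.card ≤ (A + B).card := Finset.card_le_card_add_right hB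
    have h2 : B.card ≤ (A + B).card := Finset.card_le_card_add_left hA
    have hA1 : 1 ≤ A.card := hA.card_pos
    have hB1 : 1 ≤ B.card := hB.card_pos
    omega
  · rintro ⟨hA1, hB1⟩
    obtain ⟨a, rfl⟩ := Finset.card_eq_one.1 hA1
    obtain ⟨b, rfl⟩ := Finset.card_eq_one.1 hB1
    rw [Finset.singleton_add_singleton]
    exact Finset.card_singleton _

lemma card_add_ne_max {A B : Finset ℕ} (hA : 2 ≤ A.card) (hB : 2 ≤ B.card) :
    (A + B).card ≠ max A.card B.card := by
  have hcd : A.card + B.card - 1 ≤ (A + B).card :=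
    cauchy_davenport_add_of_linearOrder_isCancelAdd
      (Finset.card_pos.1 (by omega)) (Finset.card_pos.1 (by omega))
  have hmax : max A.card B.card ≤ A.card + B.card - 2 :=
    max_le (by omega) (by omega)
  omega

/-- The 18 edges of the Frucht graph, as naturals. -/
def fruchtPairs : Finset (ℕ × ℕ) :=
  {(0,1), (0,7), (0,11), (1,2), (1,11), (2,3), (2,10), (3,4), (3,5), (4,5), (4,9),
   (5,6), (6,7), (6,8), (7,8), (8,9), (9,10), (10,11)}

lemma fruchtPairs_adj : ∀ p ∈ fruchtPairs,
    fruchtGraph.Adj ((p.1 : Fin 12)) ((p.2 : Fin 12)) := by decide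

lemma fruchtPairs_lt : ∀ p ∈ fruchtPairs, p.1 < 12 ∧ p.2 < 12 := by decide

lemma fruchtPairs_inj : ∀ p ∈ fruchtPairs, ∀ q ∈ fruchtPairs,
    s(((p.1 : Fin 12)), ((p.2 : Fin 12))) = s(((q.1 : Fin 12)), ((q.2 : Fin 12))) → p = q := by
  decide

/-- Key combinatorial fact about the Frucht graph, checked by brute force:
if every edge has an endpoint marked, then at least 3 edges have both endpoints marked. -/
lemma fruchtKey : ∀ b0 b1 b2 b3 b4 b5 b6 b7 b8 b9 b10 b11 : Bool,
    (∀ p ∈ fruchtPairs,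
      ([b0,b1,b2,b3,b4,b5,b6,b7,b8,b9,b10,b11].getD p.1 false
        || [b0,b1,b2,b3,b4,b5,b6,b7,b8,b9,b10,b11].getD p.2 false) = true) →
    3 ≤ (fruchtPairs.filter (fun p =>
      ([b0,b1,b2,b3,b4,b5,b6,b7,b8,b9,b10,b11].getD p.1 false
        && [b0,b1,b2,b3,b4,b5,b6,b7,b8,b9,b10,b11].getD p.2 false) = true)).card := by
  decide

lemma lower_bound (f : Fin 12 → Finset ℕ) (hf : IsWeakIASI fruchtGraph f) :
    3 ≤ monoEdgeCount fruchtGraph f := by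
  classical
  set S : Fin 12 → Bool := fun v => decide ((f v).card = 1) with hS
  -- every vertex whose label is not a singleton has all neighbors singleton
  have hbig : ∀ v : Fin 12, S v = false → 2 ≤ (f v).card := by
    intro v hv
    have h1 : 1 ≤ (f v).card := (hf.nonempty v).card_pos
    have h2 : (f v).card ≠ 1 := by
      intro h; rw [hS] at hv; simp [h] at hv
    omega
  have hind : ∀ u v : Fin 12, fruchtGraph.Adj u v → S u = true ∨ S v = true := by
    intro u v huv
    by_contra hc
    push_neg at hc
    obtain ⟨hu, hv⟩ := hc
    have hu2 : 2 ≤ (f u).card := hbig u (Bool.not_eq_true _ ▸ (by simpa using hu))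
    have hv2 : 2 ≤ (f v).card := hbig v (by simpa using hv)
    have hw := hf.weak u v huv
    have : edgeLabel f s(u, v) = f u + f v := rfl
    rw [this] at hw
    exact card_add_ne_max hu2 hv2 hw
  -- relate list lookups to S
  have hgetD : ∀ (k : ℕ) (hk : k < 12),
      ([S 0, S 1, S 2, S 3, S 4, S 5, S 6, S 7, S 8, S 9, S 10, S 11].getD k false)
        = S ((k : Fin 12)) := by
    intro k hk
    interval_cases k <;> rfl
  -- apply the key lemma
  have hkey := fruchtKey (S 0) (S 1) (S 2) (S 3) (S 4) (S 5) (S 6) (S 7) (S 8) (S 9) (S 10) (S 11)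
  have hhyp : ∀ p ∈ fruchtPairs,
      ([S 0, S 1, S 2, S 3, S 4, S 5, S 6, S 7, S 8, S 9, S 10, S 11].getD p.1 false
        || [S 0, S 1, S 2, S 3, S 4, S 5, S 6, S 7, S 8, S 9, S 10, S 11].getD p.2 false) = true := by
    intro p hp
    obtain ⟨h1, h2⟩ := fruchtPairs_lt p hp
    rw [hgetD p.1 h1, hgetD p.2 h2]
    rcases hind _ _ (fruchtPairs_adj p hp) with h | h <;> simp [h]
  have h3 : 3 ≤ (fruchtPairs.filter (fun p =>
      ([S 0, S 1, S 2, S 3, S 4, S 5, S 6, S 7, S 8, S 9, S 10, S 11].getD p.1 false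
        && [S 0, S 1, S 2, S 3, S 4, S 5, S 6, S 7, S 8, S 9, S 10, S 11].getD p.2 false)
        = true)).card := hkey hhyp
  rw [monoEdgeCount_eq]
  refine h3.trans (Finset.card_le_card_of_injOn
    (fun p => s(((p.1 : Fin 12)), ((p.2 : Fin 12)))) ?_ ?_)
  · intro p hp
    rw [Finset.mem_coe, Finset.mem_filter] at hp ⊢
    obtain ⟨hpF, hpQ⟩ := hp
    obtain ⟨h1, h2⟩ := fruchtPairs_lt p hpF
    rw [hgetD p.1 h1, hgetD p.2 h2, Bool.and_eq_true] at hpQ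
    obtain ⟨hq1, hq2⟩ := hpQ
    refine ⟨SimpleGraph.mem_edgeFinset.2 ((SimpleGraph.mem_edgeSet _).2 (fruchtPairs_adj p hpF)), ?_⟩
    · have : edgeLabel f s(((p.1 : Fin 12)), ((p.2 : Fin 12)))
          = f ((p.1 : Fin 12)) + f ((p.2 : Fin 12)) := rfl
      rw [this, card_add_eq_one_iff (hf.nonempty _) (hf.nonempty _)]
      rw [hS] at hq1 hq2
      exact ⟨of_decide_eq_true hq1, of_decide_eq_true hq2⟩
  · intro p hp q hq hpq
    rw [Finset.coe_filter] at hp hq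
    exact fruchtPairs_inj p hp.1 q hq.1 hpq

/-- An optimal weak IASI of the Frucht graph. -/
def fruchtLabel : Fin 12 → Finset ℕ :=
  ![{4}, {18}, {3,15}, {27}, {25}, {14,24}, {24}, {15,20}, {2}, {12,25}, {8}, {3,6}]

lemma fruchtLabel_isWeakIASI : IsWeakIASI fruchtGraph fruchtLabel := by
  constructor
  · decide
  · have h : ∀ a b : Fin 12, fruchtLabel a = fruchtLabel b → a = b := by decide
    exact fun a b hab => h a b hab
  · have h : ∀ a ∈ fruchtGraph.edgeFinset, ∀ b ∈ fruchtGraph.edgeFinset,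
        edgeLabel fruchtLabel a = edgeLabel fruchtLabel b → a = b := by decide
    intro a ha b hb hab
    exact h a (SimpleGraph.mem_edgeFinset.2 ha) b (SimpleGraph.mem_edgeFinset.2 hb) hab
  · decide

lemma fruchtLabel_count : monoEdgeCount fruchtGraph fruchtLabel = 3 := by
  rw [monoEdgeCount_eq]
  decide

/-- The sparing number of the Frucht graph is `3`. -/
theorem sparingNumber_frucht : sparingNumber fruchtGraph = 3 := by
  have hmem : (3 : ℕ) ∈ {n | ∃ f, IsWeakIASI fruchtGraph f ∧ monoEdgeCount fruchtGraph f = n} :=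
    ⟨fruchtLabel, fruchtLabel_isWeakIASI, fruchtLabel_count⟩
  refine le_antisymm (Nat.sInf_le hmem) (le_csInf ⟨3, hmem⟩ ?_)
  rintro n ⟨f, hf, rfl⟩
  exact lower_bound f hf
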